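/- Define polynomials b_{n,k}(q) by b_{n,k}(q) = [2k+1]_q b_{n-1,k}(q) + (1+q)(1+q^{2k-1}) q^{2k-1} [n+1-2k]_{q^2} b_{n-1,k-1}(q) for n ≥ 2 and 0 ≤ k ≤ ⌊n/2⌋, with b_{1,0}(q) = 1 and b_{n,k}(q) = 0 for k < 0 or k > ⌊n/2⌋. Then Chow–Gessel's type B q-Eulerian polynomials satisfy B_n(t,q) = sum_{k=0}^{⌊n/2⌋} b_{n,k}(q) t^k (-tq^{2k+1}; q^2)_{n-2k}. -/

import Mathlib

/-- The `q`-integer `[m]_q = 1 + q + ⋯ + q^{m-1}` as a polynomial in `q`. -/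
noncomputable def qint (m : ℕ) : Polynomial ℤ := ∑ i ∈ Finset.range m, Polynomial.X ^ i

/-- The `q²`-integer `[m]_{q²} = 1 + q² + ⋯ + q^{2(m-1)}` as a polynomial in `q`. -/
noncomputable def qint2 (m : ℕ) : Polynomial ℤ := ∑ i ∈ Finset.range m, Polynomial.X ^ (2 * i)

lemma qint_key (m : ℕ) : (1 - Polynomial.X) * qint m = 1 - Polynomial.X ^ m := by
  unfold qint
  linear_combination - geom_sum_mul (Polynomial.X : Polynomial ℤ) m

lemma qint2_key (m : ℕ) :
    (1 - Polynomial.X ^ 2) * qint2 m = 1 - Polynomial.X ^ (2 * m) := by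
  unfold qint2
  simp only [pow_mul]
  linear_combination - geom_sum_mul ((Polynomial.X : Polynomial ℤ) ^ 2) m

noncomputable def Sser (n : ℕ) : PowerSeries (Polynomial ℤ) :=
  PowerSeries.mk fun j => (qint (2 * j + 1)) ^ n

noncomputable def Pser (n : ℕ) : PowerSeries (Polynomial ℤ) :=
  ∏ i ∈ Finset.range (n + 1),
    (1 - PowerSeries.C (R := Polynomial ℤ) (Polynomial.X ^ (2 * i)) * PowerSeries.X)

lemma rescale_C' (a r : Polynomial ℤ) :
    PowerSeries.rescale a (PowerSeries.C (R := Polynomial ℤ) r) = PowerSeries.C (R := Polynomial ℤ) r := by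
  ext n
  cases n <;> simp [PowerSeries.coeff_rescale, PowerSeries.coeff_C]

lemma lemA (n : ℕ) :
    PowerSeries.C (R := Polynomial ℤ) (1 - Polynomial.X) * Sser (n + 1)
      = Sser n - PowerSeries.C (R := Polynomial ℤ) Polynomial.X *
          PowerSeries.rescale (Polynomial.X ^ 2) (Sser n) := by
  refine PowerSeries.ext fun j => ?_
  rw [PowerSeries.coeff_C_mul, map_sub, PowerSeries.coeff_C_mul, PowerSeries.coeff_rescale]
  simp only [Sser, PowerSeries.coeff_mk]
  have h := qint_key (2 * j + 1)
  have hx : (Polynomial.X : Polynomial ℤ) ^ (2 * j + 1)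
      = Polynomial.X * (Polynomial.X ^ 2) ^ j := by
    rw [← pow_mul, ← pow_succ']
  rw [hx] at h
  calc (1 - Polynomial.X) * qint (2 * j + 1) ^ (n + 1)
      = ((1 - Polynomial.X) * qint (2 * j + 1)) * qint (2 * j + 1) ^ n := by ring
    _ = _ := by rw [h]; ring

lemma base0 : (1 : PowerSeries (Polynomial ℤ)) = Sser 0 * Pser 0 := by
  have : Pser 0 = 1 - PowerSeries.X := by
    simp [Pser]
  rw [this]
  ext n
  rw [mul_sub, mul_one, mul_comm, map_sub]
  cases n with
  | zero => simp [Sser]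
  | succ m => simp [Sser, PowerSeries.coeff_succ_X_mul, PowerSeries.coeff_mk]

lemma L4 (n : ℕ) : Pser (n + 1)
    = Pser n * (1 - PowerSeries.C (R := Polynomial ℤ) (Polynomial.X ^ (2 * n + 2)) * PowerSeries.X) := by
  have : 2 * (n + 1) = 2 * n + 2 := by ring
  rw [Pser, Finset.prod_range_succ, this, Pser]

lemma L5 (n : ℕ) : Pser (n + 1)
    = (1 - PowerSeries.X) *
        ∏ i ∈ Finset.range (n + 1),
          (1 - PowerSeries.C (R := Polynomial ℤ) (Polynomial.X ^ (2 * i + 2)) * PowerSeries.X) := by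
  rw [Pser, Finset.prod_range_succ']
  have h0 : (1 - PowerSeries.C (R := Polynomial ℤ) ((Polynomial.X : Polynomial ℤ) ^ (2 * 0))
      * PowerSeries.X) = 1 - PowerSeries.X := by
    simp
  rw [h0, mul_comm]
  congr 1

lemma L6 (n : ℕ) : PowerSeries.rescale (Polynomial.X ^ 2) (Pser n)
    = ∏ i ∈ Finset.range (n + 1),
        (1 - PowerSeries.C (R := Polynomial ℤ) (Polynomial.X ^ (2 * i + 2)) * PowerSeries.X) := by
  rw [Pser, map_prod]
  refine Finset.prod_congr rfl fun i _ => ?_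
  rw [map_sub, map_one, map_mul, rescale_C', PowerSeries.rescale_X, ← mul_assoc, ← map_mul,
    ← pow_add]

lemma hCne : (PowerSeries.C (R := Polynomial ℤ) (1 - Polynomial.X)) ≠ 0 := by
  have h1 : (1 - Polynomial.X : Polynomial ℤ) ≠ 0 := by
    intro h
    have := congrArg (fun p => Polynomial.coeff p 1) h
    simp [Polynomial.coeff_one] at this
  intro h
  exact h1 (by simpa using congrArg (PowerSeries.constantCoeff (R := Polynomial ℤ)) h)

lemma step (n : ℕ) (A A' A'' : Polynomial (Polynomial ℤ))
    (hA : (A : PowerSeries (Polynomial ℤ)) = Sser n * Pser n)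
    (hA'' : (A'' : PowerSeries (Polynomial ℤ))
      = PowerSeries.C (R := Polynomial ℤ) Polynomial.X *
          PowerSeries.rescale (Polynomial.X ^ 2) (A : PowerSeries (Polynomial ℤ)))
    (hrec : Polynomial.C (1 - Polynomial.X) * A'
      = (1 - Polynomial.C ((Polynomial.X : Polynomial ℤ) ^ (2 * n + 2)) * Polynomial.X) * A
        - (1 - Polynomial.X) * A'') :
    (A' : PowerSeries (Polynomial ℤ)) = Sser (n + 1) * Pser (n + 1) := by
  have hc := congrArg (fun p : Polynomial (Polynomial ℤ) => (p : PowerSeries (Polynomial ℤ))) hrec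
  simp only [Polynomial.coe_mul, Polynomial.coe_sub, Polynomial.coe_one, Polynomial.coe_C,
    Polynomial.coe_X, Polynomial.coe_pow] at hc
  have e3 : (A'' : PowerSeries (Polynomial ℤ))
      = PowerSeries.C (R := Polynomial ℤ) Polynomial.X *
        (PowerSeries.rescale (Polynomial.X ^ 2) (Sser n) *
          ∏ i ∈ Finset.range (n + 1),
            (1 - PowerSeries.C (R := Polynomial ℤ) (Polynomial.X ^ (2 * i + 2)) * PowerSeries.X)) := by
    rw [hA'', hA, map_mul, L6]
  refine mul_left_cancel₀ hCne ?_
  linear_combination hc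
    + (1 - PowerSeries.C (R := Polynomial ℤ) (Polynomial.X ^ (2 * n + 2)) * PowerSeries.X) * hA
    - (1 - PowerSeries.X) * e3
    - Pser (n + 1) * lemA n
    - Sser n * L4 n
    + PowerSeries.C (R := Polynomial ℤ) Polynomial.X
        * PowerSeries.rescale (Polynomial.X ^ 2) (Sser n) * L5 n

/-! ### Polynomial side -/

noncomputable def Gp (n k : ℕ) : Polynomial (Polynomial ℤ) :=
  ∏ i ∈ Finset.range (n - 2 * k),
    (1 + Polynomial.C ((Polynomial.X : Polynomial ℤ) ^ (2 * k + 1 + 2 * i)) * Polynomial.X)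

noncomputable def Gp' (n k : ℕ) : Polynomial (Polynomial ℤ) :=
  ∏ i ∈ Finset.range (n - 2 * k),
    (1 + Polynomial.C ((Polynomial.X : Polynomial ℤ) ^ (2 * k + 3 + 2 * i)) * Polynomial.X)

noncomputable def Rp (b : ℕ → ℕ → Polynomial ℤ) (n : ℕ) : Polynomial (Polynomial ℤ) :=
  ∑ k ∈ Finset.range (n / 2 + 1), Polynomial.C (b n k) * Polynomial.X ^ k * Gp n k

noncomputable def Rp'' (b : ℕ → ℕ → Polynomial ℤ) (n : ℕ) : Polynomial (Polynomial ℤ) :=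
  ∑ k ∈ Finset.range (n / 2 + 1),
    Polynomial.C ((Polynomial.X : Polynomial ℤ) ^ (2 * k + 1) * b n k) * Polynomial.X ^ k
      * Gp' n k

lemma cast_sum (f : ℕ → Polynomial (Polynomial ℤ)) (N : ℕ) :
    ((∑ k ∈ Finset.range N, f k : Polynomial (Polynomial ℤ)) : PowerSeries (Polynomial ℤ))
      = ∑ k ∈ Finset.range N, ((f k : Polynomial (Polynomial ℤ)) : PowerSeries (Polynomial ℤ)) := by
  rw [← Polynomial.coeToPowerSeries.ringHom_apply, map_sum]
  simp only [Polynomial.coeToPowerSeries.ringHom_apply]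

lemma cast_term (a : Polynomial ℤ) (k : ℕ) (G : Polynomial (Polynomial ℤ)) :
    ((Polynomial.C a * Polynomial.X ^ k * G : Polynomial (Polynomial ℤ))
        : PowerSeries (Polynomial ℤ))
      = PowerSeries.C (R := Polynomial ℤ) a * PowerSeries.X ^ k
          * (G : PowerSeries (Polynomial ℤ)) := by
  simp only [Polynomial.coe_mul, Polynomial.coe_pow, Polynomial.coe_C, Polynomial.coe_X]

lemma cast_prodG (m e : ℕ) :
    ((∏ i ∈ Finset.range m,
        (1 + Polynomial.C ((Polynomial.X : Polynomial ℤ) ^ (e + 2 * i)) * Polynomial.X)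
          : Polynomial (Polynomial ℤ)) : PowerSeries (Polynomial ℤ))
      = ∏ i ∈ Finset.range m,
          (1 + PowerSeries.C (R := Polynomial ℤ) ((Polynomial.X : Polynomial ℤ) ^ (e + 2 * i))
            * PowerSeries.X) := by
  rw [← Polynomial.coeToPowerSeries.ringHom_apply, map_prod]
  refine Finset.prod_congr rfl fun i _ => ?_
  simp only [Polynomial.coeToPowerSeries.ringHom_apply, Polynomial.coe_add, Polynomial.coe_one,
    Polynomial.coe_mul, Polynomial.coe_C, Polynomial.coe_X]

lemma rescale_prodG (k m : ℕ) :
    PowerSeries.rescale (Polynomial.X ^ 2)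
      (∏ i ∈ Finset.range m,
        (1 + PowerSeries.C (R := Polynomial ℤ) ((Polynomial.X : Polynomial ℤ) ^ (2 * k + 1 + 2 * i))
          * PowerSeries.X))
      = ∏ i ∈ Finset.range m,
          (1 + PowerSeries.C (R := Polynomial ℤ) ((Polynomial.X : Polynomial ℤ) ^ (2 * k + 3 + 2 * i))
            * PowerSeries.X) := by
  rw [map_prod]
  refine Finset.prod_congr rfl fun i _ => ?_
  rw [map_add, map_one, map_mul, rescale_C', PowerSeries.rescale_X, ← mul_assoc, ← map_mul,
    ← pow_add, show 2 * k + 1 + 2 * i + 2 = 2 * k + 3 + 2 * i from by ring]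

lemma cast_Rp'' (b : ℕ → ℕ → Polynomial ℤ) (n : ℕ) :
    ((Rp'' b n : Polynomial (Polynomial ℤ)) : PowerSeries (Polynomial ℤ))
      = PowerSeries.C (R := Polynomial ℤ) Polynomial.X *
          PowerSeries.rescale (Polynomial.X ^ 2)
            ((Rp b n : Polynomial (Polynomial ℤ)) : PowerSeries (Polynomial ℤ)) := by
  rw [Rp, Rp'', cast_sum, cast_sum, map_sum, Finset.mul_sum]
  refine Finset.sum_congr rfl fun k _ => ?_
  rw [cast_term, cast_term, Gp, Gp', cast_prodG, cast_prodG]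
  rw [map_mul, map_mul, map_mul, rescale_C', rescale_prodG]
  simp only [map_pow, map_mul, PowerSeries.rescale_X]
  ring

/-! ### product splittings -/

lemma Gp_split1 (n k : ℕ) (h : 2 * k < n) :
    Gp n k = (1 + Polynomial.C ((Polynomial.X : Polynomial ℤ) ^ (2 * k + 1)) * Polynomial.X) *
      ∏ i ∈ Finset.range (n - 2 * k - 1),
        (1 + Polynomial.C ((Polynomial.X : Polynomial ℤ) ^ (2 * k + 3 + 2 * i))
          * Polynomial.X) := by
  obtain ⟨m, hm⟩ : ∃ m, n - 2 * k = m + 1 := ⟨n - 2 * k - 1, by omega⟩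
  rw [Gp, hm, show m + 1 - 1 = m from by omega, Finset.prod_range_succ',
    show 2 * k + 1 + 2 * 0 = 2 * k + 1 from by ring, mul_comm]
  refine congrArg _ ?_
  refine Finset.prod_congr rfl fun i _ => ?_
  rw [show 2 * k + 1 + 2 * (i + 1) = 2 * k + 3 + 2 * i from by ring]

lemma Gp'_split (n k : ℕ) (h : 2 * k < n) :
    Gp' n k = (∏ i ∈ Finset.range (n - 2 * k - 1),
        (1 + Polynomial.C ((Polynomial.X : Polynomial ℤ) ^ (2 * k + 3 + 2 * i)) * Polynomial.X))
      * (1 + Polynomial.C ((Polynomial.X : Polynomial ℤ) ^ (2 * (n - k) + 1)) * Polynomial.X) := by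
  obtain ⟨m, hm⟩ : ∃ m, n - 2 * k = m + 1 := ⟨n - 2 * k - 1, by omega⟩
  rw [Gp', hm, show m + 1 - 1 = m from by omega, Finset.prod_range_succ,
    show 2 * k + 3 + 2 * m = 2 * (n - k) + 1 from by omega]

lemma Gp_succ_top (n k : ℕ) (h : 2 * k ≤ n) :
    Gp (n + 1) k = Gp n k *
      (1 + Polynomial.C ((Polynomial.X : Polynomial ℤ) ^ (2 * (n - k) + 1)) * Polynomial.X) := by
  rw [Gp, Gp, show n + 1 - 2 * k = (n - 2 * k) + 1 from by omega, Finset.prod_range_succ,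
    show 2 * k + 1 + 2 * (n - 2 * k) = 2 * (n - k) + 1 from by omega]

lemma Gp_succ_succ (n k : ℕ) :
    Gp (n + 1) (k + 1) = ∏ i ∈ Finset.range (n - 2 * k - 1),
      (1 + Polynomial.C ((Polynomial.X : Polynomial ℤ) ^ (2 * k + 3 + 2 * i))
        * Polynomial.X) := by
  rw [Gp, show n + 1 - 2 * (k + 1) = n - 2 * k - 1 from by omega]
  exact Finset.prod_congr rfl fun i _ => by
    rw [show 2 * (k + 1) + 1 + 2 * i = 2 * k + 3 + 2 * i from by ring]

/-! ### termwise decomposition -/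

lemma decomp (b : ℕ → ℕ → Polynomial ℤ)
    (hb0 : ∀ n k, 1 ≤ n → n / 2 < k → b n k = 0) (n k : ℕ) (hn : 1 ≤ n) :
    (1 - Polynomial.C ((Polynomial.X : Polynomial ℤ) ^ (2 * n + 2)) * Polynomial.X) *
        (Polynomial.C (b n k) * Polynomial.X ^ k * Gp n k)
      - (1 - Polynomial.X) *
        (Polynomial.C ((Polynomial.X : Polynomial ℤ) ^ (2 * k + 1) * b n k) * Polynomial.X ^ k
          * Gp' n k)
    = Polynomial.C ((1 - (Polynomial.X : Polynomial ℤ) ^ (2 * k + 1)) * b n k)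
        * Polynomial.X ^ k * Gp (n + 1) k
      + Polynomial.C ((1 + (Polynomial.X : Polynomial ℤ) ^ (2 * k + 1))
          * ((Polynomial.X : Polynomial ℤ) ^ (2 * k + 1)
            - (Polynomial.X : Polynomial ℤ) ^ (2 * (n - k) + 1)) * b n k)
        * Polynomial.X ^ (k + 1) * Gp (n + 1) (k + 1) := by
  rcases lt_trichotomy (2 * k) n with h | h | h
  · rw [Gp_succ_top n k h.le, Gp_split1 n k h, Gp'_split n k h, Gp_succ_succ n k]
    have f1 : Polynomial.C ((Polynomial.X : Polynomial ℤ) ^ (2 * n + 2))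
        = Polynomial.C ((Polynomial.X : Polynomial ℤ) ^ (2 * k + 1)) *
          Polynomial.C ((Polynomial.X : Polynomial ℤ) ^ (2 * (n - k) + 1)) := by
      rw [← map_mul, ← pow_add, show 2 * k + 1 + (2 * (n - k) + 1) = 2 * n + 2 from by omega]
    rw [f1]
    simp only [map_mul, map_sub, map_add, map_one]
    ring
  · have hG : Gp n k = 1 := by rw [Gp, show n - 2 * k = 0 from by omega]; rfl
    have hG' : Gp' n k = 1 := by rw [Gp', show n - 2 * k = 0 from by omega]; rfl
    have hG1 : Gp (n + 1) k
        = 1 + Polynomial.C ((Polynomial.X : Polynomial ℤ) ^ (2 * k + 1)) * Polynomial.X := by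
      rw [Gp, show n + 1 - 2 * k = 1 from by omega, Finset.prod_range_one,
        show 2 * k + 1 + 2 * 0 = 2 * k + 1 from by ring]
    have hG2 : Gp (n + 1) (k + 1) = 1 := by
      rw [Gp, show n + 1 - 2 * (k + 1) = 0 from by omega]; rfl
    have hzero : ((Polynomial.X : Polynomial ℤ) ^ (2 * k + 1)
        - (Polynomial.X : Polynomial ℤ) ^ (2 * (n - k) + 1)) = 0 := by
      rw [show 2 * (n - k) + 1 = 2 * k + 1 from by omega, sub_self]
    have f1 : Polynomial.C ((Polynomial.X : Polynomial ℤ) ^ (2 * n + 2))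
        = Polynomial.C ((Polynomial.X : Polynomial ℤ) ^ (2 * k + 1)) *
          Polynomial.C ((Polynomial.X : Polynomial ℤ) ^ (2 * k + 1)) := by
      rw [← map_mul, ← pow_add, show 2 * k + 1 + (2 * k + 1) = 2 * n + 2 from by omega]
    rw [hG, hG', hG1, hG2, hzero, f1]
    simp only [map_mul, map_sub, map_add, map_one, map_zero]
    ring
  · have hz : b n k = 0 := hb0 n k hn (by omega)
    simp [hz]

lemma sum_ext (f : ℕ → Polynomial (Polynomial ℤ)) (M N : ℕ) (h : M ≤ N)
    (hz : ∀ k, M ≤ k → f k = 0) :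
    ∑ k ∈ Finset.range M, f k = ∑ k ∈ Finset.range N, f k :=
  Finset.sum_subset (Finset.range_subset_range.mpr h)
    (fun x _ hx => hz x (by simpa using hx))

lemma PI (b : ℕ → ℕ → Polynomial ℤ)
    (hb0 : ∀ n k, 1 ≤ n → n / 2 < k → b n k = 0)
    (hbrec0 : ∀ n, 2 ≤ n → b n 0 = b (n - 1) 0)
    (hbrec : ∀ n k, 2 ≤ n → 1 ≤ k → k ≤ n / 2 →
      b n k = qint (2 * k + 1) * b (n - 1) k +
        (1 + Polynomial.X) * (1 + Polynomial.X ^ (2 * k - 1)) * Polynomial.X ^ (2 * k - 1) *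
          qint2 (n + 1 - 2 * k) * b (n - 1) (k - 1))
    (n : ℕ) (hn : 1 ≤ n) :
    Polynomial.C (1 - (Polynomial.X : Polynomial ℤ)) * Rp b (n + 1)
      = (1 - Polynomial.C ((Polynomial.X : Polynomial ℤ) ^ (2 * n + 2)) * Polynomial.X)
          * Rp b n
        - (1 - Polynomial.X) * Rp'' b n := by
  set N := n / 2 + 1 with hN
  -- extend all sums to `range (N + 1)`
  have hext1 : Rp b (n + 1) = ∑ k ∈ Finset.range (N + 1),
      Polynomial.C (b (n + 1) k) * Polynomial.X ^ k * Gp (n + 1) k := by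
    rw [Rp]
    exact sum_ext _ _ _ (by omega) fun k hk => by
      rw [hb0 (n + 1) k (by omega) (by omega)]; simp
  have hext2 : Rp b n = ∑ k ∈ Finset.range (N + 1),
      Polynomial.C (b n k) * Polynomial.X ^ k * Gp n k := by
    rw [Rp]
    exact sum_ext _ _ _ (by omega) fun k hk => by
      rw [hb0 n k hn (by omega)]; simp
  have hext3 : Rp'' b n = ∑ k ∈ Finset.range (N + 1),
      Polynomial.C ((Polynomial.X : Polynomial ℤ) ^ (2 * k + 1) * b n k) * Polynomial.X ^ k
        * Gp' n k := by
    rw [Rp'']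
    exact sum_ext _ _ _ (by omega) fun k hk => by
      rw [hb0 n k hn (by omega)]; simp
  rw [hext1, hext2, hext3, Finset.mul_sum, Finset.mul_sum, Finset.mul_sum,
    ← Finset.sum_sub_distrib]
  have hdec : ∀ k ∈ Finset.range (N + 1),
      (1 - Polynomial.C ((Polynomial.X : Polynomial ℤ) ^ (2 * n + 2)) * Polynomial.X) *
          (Polynomial.C (b n k) * Polynomial.X ^ k * Gp n k)
        - (1 - Polynomial.X) *
          (Polynomial.C ((Polynomial.X : Polynomial ℤ) ^ (2 * k + 1) * b n k)
            * Polynomial.X ^ k * Gp' n k)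
      = Polynomial.C ((1 - (Polynomial.X : Polynomial ℤ) ^ (2 * k + 1)) * b n k)
          * Polynomial.X ^ k * Gp (n + 1) k
        + Polynomial.C ((1 + (Polynomial.X : Polynomial ℤ) ^ (2 * k + 1))
            * ((Polynomial.X : Polynomial ℤ) ^ (2 * k + 1)
              - (Polynomial.X : Polynomial ℤ) ^ (2 * (n - k) + 1)) * b n k)
          * Polynomial.X ^ (k + 1) * Gp (n + 1) (k + 1) :=
    fun k _ => decomp b hb0 n k hn
  rw [Finset.sum_congr rfl hdec, Finset.sum_add_distrib]
  -- last `extra` term vanishes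
  have hlast : Polynomial.C ((1 + (Polynomial.X : Polynomial ℤ) ^ (2 * N + 1))
      * ((Polynomial.X : Polynomial ℤ) ^ (2 * N + 1)
        - (Polynomial.X : Polynomial ℤ) ^ (2 * (n - N) + 1)) * b n N)
      * Polynomial.X ^ (N + 1) * Gp (n + 1) (N + 1) = 0 := by
    rw [hb0 n N hn (by omega)]; simp
  rw [Finset.sum_range_succ
      (fun k => Polynomial.C ((1 + (Polynomial.X : Polynomial ℤ) ^ (2 * k + 1))
          * ((Polynomial.X : Polynomial ℤ) ^ (2 * k + 1)
            - (Polynomial.X : Polynomial ℤ) ^ (2 * (n - k) + 1)) * b n k)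
        * Polynomial.X ^ (k + 1) * Gp (n + 1) (k + 1)) N,
    hlast, add_zero,
    Finset.sum_range_succ'
      (fun k => Polynomial.C (1 - (Polynomial.X : Polynomial ℤ)) *
        (Polynomial.C (b (n + 1) k) * Polynomial.X ^ k * Gp (n + 1) k)) N,
    Finset.sum_range_succ'
      (fun k => Polynomial.C ((1 - (Polynomial.X : Polynomial ℤ) ^ (2 * k + 1)) * b n k)
        * Polynomial.X ^ k * Gp (n + 1) k) N]
  -- k = 0 terms agree
  have h0 : Polynomial.C (1 - (Polynomial.X : Polynomial ℤ)) *
      (Polynomial.C (b (n + 1) 0) * Polynomial.X ^ 0 * Gp (n + 1) 0)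
      = Polynomial.C ((1 - (Polynomial.X : Polynomial ℤ) ^ (2 * 0 + 1)) * b n 0)
        * Polynomial.X ^ 0 * Gp (n + 1) 0 := by
    have := hbrec0 (n + 1) (by omega)
    simp only [Nat.add_sub_cancel] at this
    rw [this]
    simp only [map_mul, map_sub, map_one, map_pow]
    ring
  -- shifted terms
  have hshift : ∀ k, Polynomial.C (1 - (Polynomial.X : Polynomial ℤ)) *
      (Polynomial.C (b (n + 1) (k + 1)) * Polynomial.X ^ (k + 1) * Gp (n + 1) (k + 1))
      = Polynomial.C ((1 - (Polynomial.X : Polynomial ℤ) ^ (2 * (k + 1) + 1)) * b n (k + 1))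
          * Polynomial.X ^ (k + 1) * Gp (n + 1) (k + 1)
        + Polynomial.C ((1 + (Polynomial.X : Polynomial ℤ) ^ (2 * k + 1))
            * ((Polynomial.X : Polynomial ℤ) ^ (2 * k + 1)
              - (Polynomial.X : Polynomial ℤ) ^ (2 * (n - k) + 1)) * b n k)
          * Polynomial.X ^ (k + 1) * Gp (n + 1) (k + 1) := by
    intro k
    by_cases hk : 2 * k + 1 ≤ n
    · have hr := hbrec (n + 1) (k + 1) (by omega) (by omega) (by omega)
      simp only [Nat.add_sub_cancel] at hr
      rw [show 2 * (k + 1) - 1 = 2 * k + 1 from by omega,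
        show n + 1 + 1 - 2 * (k + 1) = n - 2 * k from by omega] at hr
      rw [hr]
      have harg : (1 - (Polynomial.X : Polynomial ℤ)) *
          (qint (2 * (k + 1) + 1) * b n (k + 1) +
            (1 + Polynomial.X) * (1 + Polynomial.X ^ (2 * k + 1)) * Polynomial.X ^ (2 * k + 1) *
              qint2 (n - 2 * k) * b n k)
          = (1 - (Polynomial.X : Polynomial ℤ) ^ (2 * (k + 1) + 1)) * b n (k + 1)
            + (1 + (Polynomial.X : Polynomial ℤ) ^ (2 * k + 1))
              * ((Polynomial.X : Polynomial ℤ) ^ (2 * k + 1)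
                - (Polynomial.X : Polynomial ℤ) ^ (2 * (n - k) + 1)) * b n k := by
        have e1 := qint_key (2 * (k + 1) + 1)
        have e2 := qint2_key (n - 2 * k)
        have e3 : (Polynomial.X : Polynomial ℤ) ^ (2 * k + 1)
            * (Polynomial.X : Polynomial ℤ) ^ (2 * (n - 2 * k))
            = (Polynomial.X : Polynomial ℤ) ^ (2 * (n - k) + 1) := by
          rw [← pow_add]; congr 1; omega
        linear_combination b n (k + 1) * e1
          + (1 + (Polynomial.X : Polynomial ℤ) ^ (2 * k + 1))
              * (Polynomial.X : Polynomial ℤ) ^ (2 * k + 1) * b n k * e2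
          - (1 + (Polynomial.X : Polynomial ℤ) ^ (2 * k + 1)) * b n k * e3
      have h2 := congrArg (Polynomial.C : Polynomial ℤ → Polynomial (Polynomial ℤ)) harg
      simp only [map_add, map_mul, map_sub, map_one, map_pow] at h2 ⊢
      linear_combination (Polynomial.X ^ (k + 1) * Gp (n + 1) (k + 1)) * h2
    · have hz1 : b (n + 1) (k + 1) = 0 := hb0 (n + 1) (k + 1) (by omega) (by omega)
      have hz2 : b n (k + 1) = 0 := hb0 n (k + 1) hn (by omega)
      by_cases h2 : 2 * k = n
      · have hzero : ((Polynomial.X : Polynomial ℤ) ^ (2 * k + 1)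
            - (Polynomial.X : Polynomial ℤ) ^ (2 * (n - k) + 1)) = 0 := by
          rw [show 2 * (n - k) + 1 = 2 * k + 1 from by omega, sub_self]
        rw [hz1, hz2, hzero]; simp
      · have hz3 : b n k = 0 := hb0 n k hn (by omega)
        rw [hz1, hz2, hz3]; simp
  rw [Finset.sum_congr rfl (fun k (_ : k ∈ Finset.range N) => hshift k), h0,
    Finset.sum_add_distrib]
  ring


/-- With `b_{n,k}(q)` defined by
`b_{n,k}(q) = [2k+1]_q b_{n-1,k}(q) + (1+q)(1+q^{2k-1}) q^{2k-1} [n+1-2k]_{q²} b_{n-1,k-1}(q)`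
for `n ≥ 2`, `0 ≤ k ≤ ⌊n/2⌋` (the instance `k = 0` reading `b_{n,0} = b_{n-1,0}` since
`b_{n-1,-1} = 0`), with `b_{1,0}(q) = 1` and `b_{n,k}(q) = 0` for `k > ⌊n/2⌋`,
Chow–Gessel's type B q-Eulerian polynomials, defined by
`∑_{j≥0} [2j+1]_q^n t^j = B_n(t,q)/(t;q²)_{n+1}`, satisfy
`B_n(t,q) = ∑_{k=0}^{⌊n/2⌋} b_{n,k}(q) t^k (-tq^{2k+1};q²)_{n-2k}`. -/
theorem chowGessel_qEulerianB_gamma_expansion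
    (B : ℕ → Polynomial (Polynomial ℤ))
    (hB : ∀ n, ((B n : PowerSeries (Polynomial ℤ)) =
      PowerSeries.mk (fun j => (qint (2 * j + 1)) ^ n) *
        ∏ i ∈ Finset.range (n + 1),
          (1 - PowerSeries.C (R := Polynomial ℤ) (Polynomial.X ^ (2 * i)) * PowerSeries.X)))
    (b : ℕ → ℕ → Polynomial ℤ)
    (hb10 : b 1 0 = 1)
    (hb0 : ∀ n k, 1 ≤ n → n / 2 < k → b n k = 0)
    (hbrec0 : ∀ n, 2 ≤ n → b n 0 = b (n - 1) 0)
    (hbrec : ∀ n k, 2 ≤ n → 1 ≤ k → k ≤ n / 2 →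
      b n k = qint (2 * k + 1) * b (n - 1) k +
        (1 + Polynomial.X) * (1 + Polynomial.X ^ (2 * k - 1)) * Polynomial.X ^ (2 * k - 1) *
          qint2 (n + 1 - 2 * k) * b (n - 1) (k - 1)) :
    ∀ n, 1 ≤ n →
      B n = ∑ k ∈ Finset.range (n / 2 + 1),
        Polynomial.C (b n k) * Polynomial.X ^ k *
          ∏ i ∈ Finset.range (n - 2 * k),
            ((1 + Polynomial.C ((Polynomial.X : Polynomial ℤ) ^ (2 * k + 1 + 2 * i)) *
              Polynomial.X : Polynomial (Polynomial ℤ))) := by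
  have key : ∀ m : ℕ, ((Rp b (m + 1) : Polynomial (Polynomial ℤ)) : PowerSeries (Polynomial ℤ))
      = Sser (m + 1) * Pser (m + 1) := by
    intro m
    induction m with
    | zero =>
      refine step 0 1 (Rp b 1) (Polynomial.C Polynomial.X) ?_ ?_ ?_
      · rw [Polynomial.coe_one]; exact base0
      · rw [Polynomial.coe_C, Polynomial.coe_one, map_one, mul_one]
      · have h1 : Rp b 1 = 1 + Polynomial.C ((Polynomial.X : Polynomial ℤ) ^ 1)
            * Polynomial.X := by
          rw [Rp]
          norm_num [Gp, hb10, Finset.sum_range_one, Finset.prod_range_one]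
        rw [h1]
        simp only [map_sub, map_one, map_pow, pow_one]
        ring
    | succ m ih =>
      exact step (m + 1) (Rp b (m + 1)) (Rp b (m + 2)) (Rp'' b (m + 1)) ih
        (cast_Rp'' b (m + 1)) (PI b hb0 hbrec0 hbrec (m + 1) (by omega))
  intro n hn
  obtain ⟨m, rfl⟩ : ∃ m, n = m + 1 := ⟨n - 1, by omega⟩
  have h1 : ((B (m + 1) : Polynomial (Polynomial ℤ)) : PowerSeries (Polynomial ℤ))
      = Sser (m + 1) * Pser (m + 1) := hB (m + 1)
  have h2 : B (m + 1) = Rp b (m + 1) :=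
    Polynomial.coe_inj.mp (h1.trans (key m).symm)
  rw [h2]
  simp only [Rp, Gp]
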